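/- Let R be an affine domain over a field k and φ a nontrivial exponential map on R. If x ∈ R \ R^φ is such that deg_W φ_W(x) is of minimal positive degree among elements of R, and c ∈ R is the leading W-coefficient of φ_W(x), then c ∈ R^φ and R[c^{-1}] = R^φ[c^{-1}][x], i.e., the localization of R at c is a polynomial ring in x over the localization of R^φ at c. -/

import Mathlib

set_option linter.unusedSectionVars false
set_option maxHeartbeats 1000000
set_option synthInstance.maxHeartbeats 400000
open Polynomial

section Aux

lemma lucasB (p : ℕ) [Fact p.Prime] : ∀ (e d : ℕ), ¬ p ∣ Nat.choose d (d % p^e) := by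
  intro e
  induction e with
  | zero =>
      intro d h
      simp [Nat.mod_one] at h
      exact (Fact.out : p.Prime).one_lt.ne' h
  | succ e ih =>
      intro d hdvd
      have hp : 0 < p := (Fact.out : p.Prime).pos
      have hmod : d % p ^ (e+1) = d % p + p * (d / p % p ^ e) := by
        rw [_root_.pow_succ', Nat.mod_mul]
      have hstep := Choose.choose_modEq_choose_mod_mul_choose_div_nat (p := p)
        (n := d) (k := d % p^(e+1))
      have h1 : (d % p^(e+1)) % p = d % p := by
        rw [hmod, Nat.add_mul_mod_self_left]; exact Nat.mod_mod_of_dvd d dvd_rfl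
      have h2 : (d % p^(e+1)) / p = d / p % p ^ e := by
        rw [hmod, Nat.add_mul_div_left _ _ hp, Nat.div_eq_of_lt (Nat.mod_lt _ hp), Nat.zero_add]
      rw [h1, h2, Nat.choose_self, one_mul] at hstep
      exact ih _ (Nat.modEq_zero_iff_dvd.mp (hstep.symm.trans (Nat.modEq_zero_iff_dvd.mpr hdvd)))

lemma ppowA (p : ℕ) [Fact p.Prime] : ∀ n : ℕ, 1 ≤ n →
    (∀ i, 0 < i → i < n → p ∣ n.choose i) → ∃ e, n = p ^ e := by
  intro n
  induction n using Nat.strong_induction_on with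
  | _ n ih =>
    intro hn1 hch
    rcases eq_or_lt_of_le hn1 with h1 | h2
    · exact ⟨0, h1.symm⟩
    · have hp : 0 < p := (Fact.out : p.Prime).pos
      have hpn : p ∣ n := by
        have := hch 1 one_pos h2
        rwa [Nat.choose_one_right] at this
      obtain ⟨m, rfl⟩ := hpn
      have hm1 : 1 ≤ m := by
        rcases Nat.eq_zero_or_pos m with h | h
        · subst h; simp at h2
        · exact h
      have hmn : m < p * m := by
        have : 1 < p := (Fact.out : p.Prime).one_lt
        calc m = 1 * m := (one_mul m).symm
        _ < p * m := by exact Nat.mul_lt_mul_of_lt_of_le this le_rfl hm1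
      have hch' : ∀ j, 0 < j → j < m → p ∣ m.choose j := by
        intro j hj0 hjm
        have hkey : p ∣ (p*m).choose (p*j) := hch (p*j) (by positivity) (by
          exact (Nat.mul_lt_mul_left hp).mpr hjm)
        have hstep := Choose.choose_modEq_choose_mod_mul_choose_div_nat (p := p)
          (n := p*m) (k := p*j)
        rw [Nat.mul_mod_right, Nat.mul_mod_right, Nat.mul_div_cancel_left _ hp,
          Nat.mul_div_cancel_left _ hp, Nat.choose_self, one_mul] at hstep
        exact Nat.modEq_zero_iff_dvd.mp (hstep.symm.trans (Nat.modEq_zero_iff_dvd.mpr hkey))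
      obtain ⟨e, he⟩ := ih m hmn hm1 hch'
      exact ⟨e + 1, by rw [he, pow_succ, mul_comm]⟩

lemma ndvdD (p n d : ℕ) [Fact p.Prime] (hn1 : 1 ≤ n)
    (hn : ∀ i, 0 < i → i < n → p ∣ n.choose i)
    (hnd : n ≤ d)
    (hd : ∀ i, 0 < i → i < d → ¬ p ∣ d.choose i → n ∣ i) : n ∣ d := by
  obtain ⟨e, rfl⟩ := ppowA p n hn1 hn
  by_contra hdvd
  have hppos : 0 < p ^ e := pow_pos (Fact.out : p.Prime).pos e
  have hi : 0 < d % p^e := Nat.pos_of_ne_zero (fun h => hdvd (Nat.dvd_of_mod_eq_zero h))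
  have hlt : d % p^e < d := lt_of_lt_of_le (Nat.mod_lt _ hppos) hnd
  have h1 := hd _ hi hlt (lucasB p e d)
  have h2 := Nat.le_of_dvd hi h1
  exact absurd (Nat.mod_lt _ hppos) (not_lt.mpr h2)


variable {R0 : Type*} [CommRing R0]

lemma keyE (p : Polynomial R0) (m j : ℕ) :
    ((p.eval₂ (C.comp C) (X + Polynomial.C Polynomial.X)).coeff m).coeff j
      = ((m+j).choose m : R0) * p.coeff (m+j) := by
  rw [eval₂_eq_sum, Polynomial.sum_def, finset_sum_coeff, finset_sum_coeff]
  have hterm : ∀ i ∈ p.support,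
      (((C.comp C) (p.coeff i) * (X + Polynomial.C Polynomial.X)^i).coeff m).coeff j
        = if i = m + j then ((m+j).choose m : R0) * p.coeff i else 0 := by
    intro i _
    rw [RingHom.comp_apply, coeff_C_mul, coeff_C_mul, coeff_X_add_C_pow]
    rw [(map_natCast (Polynomial.C : R0 →+* Polynomial R0) (i.choose m)).symm]
    rw [mul_comm ((X : Polynomial R0)^(i-m)) _, coeff_C_mul, coeff_X_pow]
    by_cases h : i = m + j
    · subst h
      simp [Nat.add_sub_cancel_left, mul_comm]
    · by_cases h2 : j = i - m
      · have hlt : i < m := by omega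
        simp [h, Nat.choose_eq_zero_of_lt hlt]
      · simp [h, h2]
  rw [Finset.sum_congr rfl hterm, Finset.sum_ite_eq' p.support (m+j)
    (fun i => ((m+j).choose m : R0) * p.coeff i)]
  split_ifs with h
  · rfl
  · rw [Polynomial.notMem_support_iff.mp h, mul_zero]




variable {k R : Type*} [Field k] [CommRing R] [IsDomain R] [Algebra k R]

section Core
variable (φ : R →ₐ[k] Polynomial R)
  (heval : ∀ a : R, (φ a).eval 0 = a)
  (hkey : ∀ (a : R) (m j : ℕ),
    (φ ((φ a).coeff m)).coeff j = (((m+j).choose m : R)) * (φ a).coeff (m+j))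

include heval in
lemma L0 (a : R) : (φ a).coeff 0 = a := by
  rw [coeff_zero_eq_eval_zero, heval]

include heval in
lemma L1 (a : R) (h : (φ a).natDegree = 0) : φ a = Polynomial.C a := by
  obtain ⟨b, hb⟩ := Polynomial.natDegree_eq_zero.mp h
  rw [← hb]
  congr 1
  rw [← L0 φ heval a, ← hb, coeff_C_zero]

include heval hkey in
lemma L2 (a : R) : φ ((φ a).leadingCoeff) = Polynomial.C ((φ a).leadingCoeff) := by
  ext j
  rcases Nat.eq_zero_or_pos j with rfl | hj
  · rw [L0 φ heval, coeff_C_zero]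
  · rw [coeff_C, if_neg hj.ne']
    rw [Polynomial.leadingCoeff, hkey a ((φ a).natDegree) j]
    rw [Polynomial.coeff_eq_zero_of_natDegree_lt (by omega), mul_zero]

include hkey in
lemma L3 (a : R) (i j : ℕ) (h : (φ a).natDegree < i + j) :
    (φ ((φ a).coeff i)).coeff j = 0 := by
  rw [hkey a i j, Polynomial.coeff_eq_zero_of_natDegree_lt h, mul_zero]

include heval in
lemma Lne (a : R) (h : a ≠ 0) : φ a ≠ 0 := by
  intro h0
  apply h
  rw [← heval a, h0, eval_zero]

include heval in
lemma Ldeg1 (a : R) (h : φ a ≠ Polynomial.C a) : 1 ≤ (φ a).natDegree := by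
  by_contra h'
  exact h (L1 φ heval a (by omega))

include heval hkey in
lemma L4 (a : R) (ha : φ a ≠ 0) (i : ℕ) (hi : i ≤ (φ a).natDegree)
    (hb : (((φ a).natDegree.choose i : R)) ≠ 0) :
    (φ ((φ a).coeff i)).natDegree = (φ a).natDegree - i := by
  apply le_antisymm
  · rw [Polynomial.natDegree_le_iff_coeff_eq_zero]
    intro m hm
    exact L3 φ hkey a i m (by omega)
  · apply Polynomial.le_natDegree_of_ne_zero
    rw [hkey a i ((φ a).natDegree - i), Nat.add_sub_cancel' hi]
    exact mul_ne_zero hb (Polynomial.leadingCoeff_ne_zero.mpr ha)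

include heval hkey in
lemma L5 (x : R) (hx : φ x ≠ Polynomial.C x)
    (hmin : ∀ y : R, φ y ≠ Polynomial.C y → (φ x).natDegree ≤ (φ y).natDegree)
    (i : ℕ) (hi0 : 0 < i) (hin : i < (φ x).natDegree) :
    (((φ x).natDegree.choose i : R)) = 0 := by
  set n := (φ x).natDegree with hn
  set y := (φ x).coeff i with hy
  have hydeg : (φ y).natDegree ≤ n - i := by
    rw [Polynomial.natDegree_le_iff_coeff_eq_zero]
    intro m hm
    exact L3 φ hkey x i m (by omega)
  have hyC : φ y = Polynomial.C y := by
    by_contra h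
    have := hmin y h
    omega
  have h0 : (φ y).coeff (n - i) = 0 := by
    rw [hyC, coeff_C, if_neg (by omega)]
  rw [hkey x i (n - i), Nat.add_sub_cancel' hin.le] at h0
  have hφx0 : φ x ≠ 0 := fun h => hx (by rw [h, show x = (0:R) from by rw [← heval x, h, eval_zero]]; simp)
  have hlc : (φ x).coeff n ≠ 0 := by
    rw [hn, ← Polynomial.leadingCoeff]
    exact Polynomial.leadingCoeff_ne_zero.mpr hφx0
  rcases mul_eq_zero.mp h0 with h | h
  · exact h
  · exact absurd h hlc
end Core

section Main
variable (φ : R →ₐ[k] Polynomial R)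
  (heval : ∀ a : R, (φ a).eval 0 = a)
  (hkey : ∀ (a : R) (m j : ℕ),
    (φ ((φ a).coeff m)).coeff j = (((m+j).choose m : R)) * (φ a).coeff (m+j))
  (Rφ : Subalgebra k R) (hRφ : ∀ a : R, a ∈ Rφ ↔ φ a = Polynomial.C a)
  (x : R) (hx : φ x ≠ Polynomial.C x)
  (hmin : ∀ y : R, φ y ≠ Polynomial.C y → (φ x).natDegree ≤ (φ y).natDegree)

include heval hkey hRφ hx hmin in
theorem Lmain : ∀ d : ℕ, ∀ a : R, (φ a).natDegree = d →
    ((φ x).natDegree ∣ d ∧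
      ∃ m : ℕ, (φ x).leadingCoeff ^ m * a ∈ Subring.closure ((Rφ : Set R) ∪ {x})) := by
  set n := (φ x).natDegree with hn
  set c := (φ x).leadingCoeff with hc
  set N := Subring.closure ((Rφ : Set R) ∪ {x}) with hN
  have hxmem : x ∈ N := Subring.subset_closure (Or.inr rfl)
  have hRmem : ∀ r : R, r ∈ Rφ → r ∈ N := fun r hr => Subring.subset_closure (Or.inl hr)
  have hn1 : 1 ≤ n := Ldeg1 φ heval x hx
  have hx0 : x ≠ 0 := by
    intro h
    apply hx
    rw [h, map_zero, map_zero]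
  have hφx0 : φ x ≠ 0 := Lne φ heval x hx0
  have hc0 : c ≠ 0 := Polynomial.leadingCoeff_ne_zero.mpr hφx0
  have hcmem : c ∈ Rφ := (hRφ c).mpr (L2 φ heval hkey x)
  intro d
  induction d using Nat.strong_induction_on with
  | _ d ih =>
    intro a hd
    rcases Nat.eq_zero_or_pos d with rfl | hd1
    · refine ⟨dvd_zero n, 0, ?_⟩
      rw [pow_zero, one_mul]
      exact hRmem a ((hRφ a).mpr (L1 φ heval a hd))
    · have haC : φ a ≠ Polynomial.C a := by
        intro h
        rw [h, Polynomial.natDegree_C] at hd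
        omega
      have hnd : n ≤ d := hd ▸ hmin a haC
      have ha0 : a ≠ 0 := by
        intro h
        rw [h, map_zero, Polynomial.natDegree_zero] at hd
        omega
      have hφa0 : φ a ≠ 0 := Lne φ heval a ha0
      have hb0 : (φ a).leadingCoeff ≠ 0 := Polynomial.leadingCoeff_ne_zero.mpr hφa0
      set b := (φ a).leadingCoeff with hb
      -- divisibility
      have hdvd : n ∣ d := by
        rcases CharP.char_is_prime_or_zero R (ringChar R) with hp | h0
        · haveI : Fact (ringChar R).Prime := ⟨hp⟩
          apply ndvdD (ringChar R) n d hn1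
          · intro i hi0 hiN
            exact (CharP.cast_eq_zero_iff R (ringChar R) _).mp
              (L5 φ heval hkey x hx hmin i hi0 hiN)
          · exact hnd
          · intro i hi0 hid hnp
            have hbne : ((d.choose (d - i) : R)) ≠ 0 := by
              rw [Nat.choose_symm hid.le]
              exact fun h => hnp ((CharP.cast_eq_zero_iff R (ringChar R) _).mp h)
            have hdeg : (φ ((φ a).coeff (d - i))).natDegree = i := by
              have := L4 φ heval hkey a hφa0 (d - i) (by omega) (by rw [hd]; exact hbne)
              rw [hd] at this
              omega
            exact (ih i hid _ hdeg).1
        · haveI : CharP R 0 := h0 ▸ ringChar.charP R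
          haveI : CharZero R := CharP.charP_to_charZero R
          have hn1' : n = 1 := by
            by_contra h
            have h2 : (1:ℕ) < n := by omega
            have := L5 φ heval hkey x hx hmin 1 one_pos h2
            rw [Nat.choose_one_right] at this
            exact (by omega : n ≠ 0) (Nat.cast_eq_zero.mp this)
          rw [hn1']
          exact one_dvd d
      refine ⟨hdvd, ?_⟩
      obtain ⟨q, hq⟩ := hdvd
      have hbmem : b ∈ Rφ := (hRφ b).mpr (L2 φ heval hkey a)
      have hφc : φ c = Polynomial.C c := L2 φ heval hkey x
      have hφb : φ b = Polynomial.C b := L2 φ heval hkey a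
      set a' := c ^ q * a - b * x ^ q with ha'
      have hφa' : φ a' = Polynomial.C (c ^ q) * φ a - Polynomial.C b * (φ x) ^ q := by
        rw [ha', map_sub, map_mul, map_mul, map_pow, map_pow, hφc, hφb, ← map_pow]
      have hXq : ((φ x) ^ q).natDegree = d := by
        rw [Polynomial.natDegree_pow, ← hn, mul_comm, ← hq]
      have hXqc : ((φ x) ^ q).coeff d = c ^ q := by
        conv_lhs => rw [← hXq]
        rw [← Polynomial.leadingCoeff, Polynomial.leadingCoeff_pow]
      have hcoeffd : (φ a').coeff d = 0 := by
        rw [hφa', Polynomial.coeff_sub, Polynomial.coeff_C_mul, Polynomial.coeff_C_mul,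
          hXqc, ← hd]
        rw [← Polynomial.leadingCoeff, ← hb]
        ring
      have hle : (φ a').natDegree ≤ d := by
        rw [hφa']
        apply le_trans (Polynomial.natDegree_sub_le _ _)
        apply max_le
        · apply le_trans (Polynomial.natDegree_mul_le)
          rw [Polynomial.natDegree_C, hd]
          omega
        · apply le_trans (Polynomial.natDegree_mul_le)
          rw [Polynomial.natDegree_C, hXq]
          omega
      by_cases ha'0 : a' = 0
      · refine ⟨q, ?_⟩
        have : c ^ q * a = b * x ^ q := by
          have := sub_eq_zero.mp (ha' ▸ ha'0)
          linear_combination this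
        rw [this]
        exact mul_mem (hRmem b hbmem) (pow_mem hxmem q)
      · have hφa'0 : φ a' ≠ 0 := Lne φ heval a' ha'0
        have hlt : (φ a').natDegree < d := by
          rcases lt_or_eq_of_le hle with h | h
          · exact h
          · exfalso
            apply Polynomial.leadingCoeff_ne_zero.mpr hφa'0
            rw [Polynomial.leadingCoeff, h, hcoeffd]
        obtain ⟨-, m, hm⟩ := ih _ hlt a' rfl
        refine ⟨m + q, ?_⟩
        have hrw : c ^ (m + q) * a = c ^ m * a' + (c ^ m * b) * x ^ q := by
          rw [ha']
          ring
        rw [hrw]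
        exact add_mem hm (mul_mem (mul_mem (pow_mem (hRmem c hcmem) m) (hRmem b hbmem))
          (pow_mem hxmem q))
end Main


variable {k R : Type*} [Field k] [CommRing R] [IsDomain R] [Algebra k R]

theorem Lfinal (φ : R →ₐ[k] Polynomial R)
    (heval : ∀ a : R, (φ a).eval 0 = a)
    (hkey : ∀ (a : R) (m j : ℕ),
      (φ ((φ a).coeff m)).coeff j = (((m+j).choose m : R)) * (φ a).coeff (m+j))
    (Rφ : Subalgebra k R) (hRφ : ∀ a : R, a ∈ Rφ ↔ φ a = Polynomial.C a)
    (x : R) (hx : φ x ≠ Polynomial.C x)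
    (hmin : ∀ y : R, φ y ≠ Polynomial.C y → (φ x).natDegree ≤ (φ y).natDegree)
    (cA : Rφ) (hcA : (cA : R) = (φ x).leadingCoeff)
    (L : Localization.Away cA →+* Localization.Away ((cA : R)))
    (hLa : ∀ r : Rφ, L (algebraMap Rφ (Localization.Away cA) r)
        = algebraMap R (Localization.Away ((cA : R))) (r : R)) :
    Function.Bijective
      (Polynomial.eval₂ L (algebraMap R (Localization.Away ((cA : R))) x)) := by
  set ψ := algebraMap R (Localization.Away ((cA : R))) with hψ
  set F := Polynomial.eval₂RingHom L (ψ x) with hF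
  have hFeq : Polynomial.eval₂ L (ψ x) = ⇑F := (Polynomial.coe_eval₂RingHom L (ψ x)).symm
  rw [hFeq]
  -- basic nonvanishing
  have hx0 : x ≠ 0 := fun h => hx (by rw [h, map_zero, map_zero])
  have hφx0 : φ x ≠ 0 := by
    intro h0
    exact hx0 (by rw [← heval x, h0, eval_zero])
  have hc0 : (cA : R) ≠ 0 := hcA ▸ Polynomial.leadingCoeff_ne_zero.mpr hφx0
  have hn1 : 1 ≤ (φ x).natDegree := by
    by_contra h'
    apply hx
    obtain ⟨b, hb⟩ := Polynomial.natDegree_eq_zero.mp (by omega : (φ x).natDegree = 0)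
    rw [← hb]
    congr 1
    rw [show b = (Polynomial.C b).eval 0 from (eval_C).symm, hb, heval]
  have hψinj : Function.Injective ψ :=
    IsLocalization.injective (Localization.Away ((cA : R)))
      (powers_le_nonZeroDivisors_of_noZeroDivisors hc0)
  constructor
  · -- injectivity
    rw [injective_iff_map_eq_zero]
    intro P hP
    obtain ⟨b, hb⟩ := IsLocalization.integerNormalization_map_to_map
      (Submonoid.powers cA) P
    set Aloc := Localization.Away cA with hAloc
    set Q := IsLocalization.integerNormalization (Submonoid.powers cA) P with hQ
    -- evaluate the normalized polynomial
    have hcomp : (L.comp (algebraMap Rφ Aloc)) =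
        ψ.comp (algebraMap Rφ R) := by
      ext r
      exact hLa r
    have heval2 : F (Q.map (algebraMap Rφ Aloc)) = ψ ((Q.map (algebraMap Rφ R)).eval x) := by
      rw [hF, Polynomial.coe_eval₂RingHom, Polynomial.eval₂_map, hcomp]
      rw [Polynomial.eval_map]
      exact (Polynomial.hom_eval₂ Q (algebraMap Rφ R) ψ x).symm
    have hz : ψ ((Q.map (algebraMap Rφ R)).eval x) = 0 := by
      rw [← heval2, hb]
      have : ((b : Rφ) • P) = Polynomial.C (algebraMap Rφ Aloc (b : Rφ)) * P := by
        rw [← Polynomial.algebraMap_apply, ← Algebra.smul_def]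
      rw [this, map_mul, hP, mul_zero]
    have hzero : (Q.map (algebraMap Rφ R)).eval x = 0 := by
      apply hψinj
      rw [hz, map_zero]
    -- transcendence of x over Rφ
    have hQ0 : Q.map (algebraMap Rφ R) = 0 := by
      by_contra hQne
      set Q' := Q.map (algebraMap Rφ R) with hQ'
      have hcompzero : Q'.comp (φ x) = 0 := by
        have h1 : φ (Q'.eval x) = Polynomial.eval₂ (φ.toRingHom) (φ x) Q' := by
          have h0 := Polynomial.hom_eval₂ Q' (RingHom.id R) (φ.toRingHom) x
          rw [RingHom.comp_id] at h0
          exact h0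
        have h2 : Polynomial.eval₂ (φ.toRingHom) (φ x) Q'
            = Polynomial.eval₂ Polynomial.C (φ x) Q' := by
          rw [hQ', Polynomial.eval₂_map, Polynomial.eval₂_map]
          congr 1
          refine RingHom.ext fun r => ?_
          exact (hRφ (r : R)).mp r.2
        rw [Polynomial.comp, ← h2, ← h1, hzero, map_zero]
      apply hQne
      by_contra h
      have hlc : (Q'.comp (φ x)).leadingCoeff ≠ 0 := by
        rw [Polynomial.leadingCoeff_comp (by omega)]
        exact mul_ne_zero (Polynomial.leadingCoeff_ne_zero.mpr h)
          (pow_ne_zero _ (Polynomial.leadingCoeff_ne_zero.mpr hφx0))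
      exact hlc (by rw [hcompzero, Polynomial.leadingCoeff_zero])
    -- conclude P = 0
    have hQzero : Q = 0 := by
      have : Function.Injective (algebraMap Rφ R) := Subtype.val_injective
      have := Polynomial.map_injective _ this
      apply this
      rw [hQ0, Polynomial.map_zero]
    have hbP : ((b : Rφ) • P) = 0 := by rw [← hb, hQzero, Polynomial.map_zero]
    have hunit : IsUnit (Polynomial.C (algebraMap Rφ Aloc (b : Rφ))) :=
      (IsLocalization.map_units Aloc b).map Polynomial.C
    rw [show ((b : Rφ) • P) = Polynomial.C (algebraMap Rφ Aloc (b : Rφ)) * P by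
      rw [← Polynomial.algebraMap_apply, ← Algebra.smul_def]] at hbP
    exact (hunit.mul_right_eq_zero).mp hbP
  · -- surjectivity
    intro z
    set Aloc := Localization.Away cA with hAloc
    -- the image of the subring closure lies in the range of F
    have hsub : ∀ r ∈ Subring.closure ((Rφ : Set R) ∪ {x}), ψ r ∈ RingHom.range (R := (Localization.Away cA)[X]) F := by
      intro r hr
      induction hr using Subring.closure_induction with
      | mem s hs =>
          rcases hs with hs | hs
          · exact ⟨Polynomial.C (algebraMap Rφ Aloc ⟨s, hs⟩), by
              rw [hF, Polynomial.coe_eval₂RingHom, Polynomial.eval₂_C, hLa]⟩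
          · rw [Set.mem_singleton_iff] at hs
            subst hs
            exact ⟨Polynomial.X, by rw [hF, Polynomial.coe_eval₂RingHom, Polynomial.eval₂_X]⟩
      | zero => rw [map_zero]; exact zero_mem _
      | one => rw [map_one]; exact one_mem _
      | add _ _ _ _ h1 h2 => rw [map_add]; exact add_mem h1 h2
      | neg _ _ h1 => rw [map_neg]; exact neg_mem h1
      | mul _ _ _ _ h1 h2 => rw [map_mul]; exact mul_mem h1 h2
    -- inverse of ψ (cA : R) in the range
    set w := L (IsLocalization.Away.invSelf (S := Aloc) cA) with hw
    have hwmem : w ∈ RingHom.range (R := (Localization.Away cA)[X]) F :=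
      ⟨Polynomial.C (IsLocalization.Away.invSelf (S := Aloc) cA), by
        rw [hF, Polynomial.coe_eval₂RingHom, Polynomial.eval₂_C]⟩
    have hcw : ψ (cA : R) * w = 1 := by
      rw [hw, ← hLa cA, ← map_mul, IsLocalization.Away.mul_invSelf, map_one]
    -- write z as a fraction
    obtain ⟨⟨r, s⟩, hrs⟩ := IsLocalization.surj (M := Submonoid.powers ((cA : R))) (S := Localization.Away ((cA : R))) z
    obtain ⟨t, ht⟩ := s.2
    obtain ⟨-, m, hm⟩ := Lmain φ heval hkey Rφ hRφ x hx hmin ((φ r).natDegree) r rfl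
    rw [← hcA] at hm
    have hrange : ψ ((cA : R) ^ m * r) ∈ RingHom.range (R := (Localization.Away cA)[X]) F := hsub _ hm
    have hzeq : z = ψ ((cA : R) ^ m * r) * w ^ (m + t) := by
      have h1 : ψ ((cA : R) ^ m * r) = ψ (cA : R) ^ m * ψ r := by rw [map_mul, map_pow]
      have h2 : ψ r = z * ψ (cA : R) ^ t := by
        rw [← hrs]
        congr 1
        rw [← ht, map_pow]
      rw [h1, h2]
      rw [show ψ (cA:R) ^ m * (z * ψ (cA:R) ^ t) * w ^ (m + t)
          = z * ((ψ (cA:R) * w) ^ (m + t)) from by ring, hcw, one_pow, mul_one]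
    rw [hzeq]
    exact mul_mem hrange (pow_mem hwmem (m + t))

end Aux



open Polynomial

/-- An exponential map on a `k`-algebra `R`: a `k`-algebra homomorphism `φ : R → R[W]`
with `ε₀ ∘ φ = id` and the coassociativity condition `φ_T φ_W = φ_{W+T}`. -/
def IsExponentialMap {k R : Type*} [CommRing k] [CommRing R] [Algebra k R]
    (φ : R →ₐ[k] Polynomial R) : Prop :=
  (∀ a : R, (φ a).eval 0 = a) ∧
  (∀ a : R, (φ a).map φ.toRingHom =
      (φ a).eval₂ (C.comp C) (Polynomial.X + Polynomial.C Polynomial.X))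

/-- Local slice property: if `x ∉ R^φ` has `deg_W φ(x)` of minimal positive degree and `c`
is the leading `W`-coefficient of `φ(x)`, then `c ∈ R^φ` and `R[c⁻¹] = R^φ[c⁻¹][x]`, i.e.
the localization `R[c⁻¹]` is a polynomial ring in `x` over `R^φ[c⁻¹]`. -/
theorem stmt6 {k R : Type*} [Field k] [CommRing R] [IsDomain R] [Algebra k R]
    [Algebra.FiniteType k R] (φ : R →ₐ[k] Polynomial R) (hφ : IsExponentialMap φ)
    (hnt : ∃ a : R, φ a ≠ Polynomial.C a)
    (Rφ : Subalgebra k R) (hRφ : ∀ a : R, a ∈ Rφ ↔ φ a = Polynomial.C a)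
    (x : R) (hx : φ x ≠ Polynomial.C x)
    (hmin : ∀ y : R, φ y ≠ Polynomial.C y → (φ x).natDegree ≤ (φ y).natDegree)
    (c : R) (hc : c = (φ x).leadingCoeff) :
    ∃ hcφ : c ∈ Rφ,
      Function.Bijective
        (Polynomial.eval₂
          (IsLocalization.Away.lift (S := Localization.Away (⟨c, hcφ⟩ : Rφ))
            (g := (algebraMap R (Localization.Away c)).comp (algebraMap ↥Rφ R))
            (⟨c, hcφ⟩ : Rφ)
            (by
              simpa using
                IsLocalization.Away.algebraMap_isUnit (S := Localization.Away c) c))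
          (algebraMap R (Localization.Away c) x)) := by
  obtain ⟨heval, hco⟩ := hφ
  have hkey : ∀ (a : R) (m j : ℕ),
      (φ ((φ a).coeff m)).coeff j = (((m+j).choose m : R)) * (φ a).coeff (m+j) := by
    intro a m j
    have h := congrArg (fun q => (q.coeff m).coeff j) (hco a)
    simpa only [Polynomial.coeff_map, keyE, AlgHom.toRingHom_eq_coe, AlgHom.coe_toRingHom] using h
  have hcφ : c ∈ Rφ := (hRφ c).mpr (by rw [hc]; exact L2 φ heval hkey x)
  refine ⟨hcφ, ?_⟩
  exact Lfinal φ heval hkey Rφ hRφ x hx hmin ⟨c, hcφ⟩ hc _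
    (fun r => IsLocalization.Away.lift_eq _ _ _)
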